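/- Let G be a finite simple graph on n vertices and write the characteristic polynomial of its hairing as χ_{H(G)}(λ) = Σ_{i=0}^{2n} a_i λ^{2n−i}. Then a_i = (−1)^{n+i} a_{2n−i} for all 0 ≤ i ≤ 2n. -/

import Mathlib

open Polynomial Matrix

lemma neg_one_pow_C (k : ℕ) : ((-1 : ℤ[X])) ^ k = C ((-1)^k) := by simp

lemma coeff_comp_neg_X (p : ℤ[X]) (i : ℕ) :
    (p.comp (-X)).coeff i = (-1) ^ i * p.coeff i := by
  induction p using Polynomial.induction_on' with
  | add p q hp hq => simp [add_comp, hp, hq, mul_add]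
  | monomial k a =>
    rw [monomial_comp, neg_pow, neg_one_pow_C,
      show C a * (C ((-1:ℤ)^k) * X ^ k) = C ((-1:ℤ)^k) * (C a * X ^ k) from by ring,
      coeff_C_mul, coeff_C_mul, coeff_X_pow, coeff_monomial]
    by_cases h : k = i
    · simp [h, mul_comm]
    · simp [h, Ne.symm h]

section Key

variable {W : Type*} [Fintype W] [DecidableEq W]

lemma key1 (A : Matrix W W ℤ) :
    (fromBlocks A 1 1 (0 : Matrix W W ℤ)).charpoly.reverse
      = det (1 - (X : ℤ[X]) • A.map C - (X ^ 2 : ℤ[X]) • (1 : Matrix W W ℤ[X])) := by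
  rw [Matrix.reverse_charpoly, Matrix.charpolyRev]
  have hN : (fromBlocks A 1 1 (0 : Matrix W W ℤ)).map (C : ℤ →+* ℤ[X])
      = fromBlocks (A.map C) 1 1 0 := by
    rw [fromBlocks_map]
    rw [Matrix.map_one _ (map_zero C) (map_one C), Matrix.map_zero _ (map_zero C)]
  rw [hN]
  have h1 : (1 : Matrix (W ⊕ W) (W ⊕ W) ℤ[X]) - (X : ℤ[X]) • fromBlocks (A.map C) 1 1 0
      = fromBlocks (1 - (X : ℤ[X]) • A.map C) (-((X : ℤ[X]) • 1)) (-((X : ℤ[X]) • 1)) 1 := by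
    rw [← fromBlocks_one, fromBlocks_smul, sub_eq_add_neg, fromBlocks_neg, fromBlocks_add]
    congr 1 <;> simp [sub_eq_add_neg]
  rw [h1, det_fromBlocks_one₂₂]
  congr 1
  rw [neg_mul_neg, Matrix.smul_mul, Matrix.mul_smul, smul_smul, one_mul, ← sq]

lemma key2 (A : Matrix W W ℤ) :
    (fromBlocks A 1 1 (0 : Matrix W W ℤ)).charpoly.comp (-X)
      = (-1) ^ Fintype.card W *
        det (1 - (X : ℤ[X]) • A.map C - (X ^ 2 : ℤ[X]) • (1 : Matrix W W ℤ[X])) := by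
  set A' : Matrix W W ℤ[X] := A.map C with hA'
  set N : Matrix (W ⊕ W) (W ⊕ W) ℤ := fromBlocks A 1 1 0 with hNdef
  set φ : ℤ[X] →+* ℤ[X] := eval₂RingHom C (-X) with hφ
  have h0 : N.charpoly.comp (-X) = det ((charmatrix N).map φ) := by
    rw [Matrix.charpoly,
      show N.charmatrix.det.comp (-X) = φ N.charmatrix.det from rfl,
      RingHom.map_det, RingHom.mapMatrix_apply]
  have hint : ∀ a : ℤ, eval₂ (C : ℤ →+* ℤ[X]) (-X) ((a : ℤ[X])) = (a : ℤ[X]) := fun a => by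
    rw [← coe_eval₂RingHom]; exact map_intCast _ a
  have h3 : (charmatrix N).map φ
      = -(fromBlocks ((X : ℤ[X]) • 1 + A') 1 1 ((X : ℤ[X]) • 1)) := by
    ext (i | i) (j | j) <;>
      simp [charmatrix_apply, diagonal_apply, Matrix.fromBlocks, Matrix.one_apply, apply_ite,
        Matrix.neg_apply, hNdef, hA', hφ, coe_eval₂RingHom, eval₂_X, eval₂_C,
        hint, Polynomial.coeff_sub, Polynomial.coeff_neg] <;>
      split_ifs <;>
      simp [coeff_sub, coeff_neg, sub_eq_add_neg, add_comm]
  rw [h0, h3, det_neg, Fintype.card_sum, ← two_mul, pow_mul, neg_one_sq, one_pow, one_mul]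
  set n := Fintype.card W with hn
  set Q : ℤ[X] := det (1 - (X : ℤ[X]) • A' - (X ^ 2 : ℤ[X]) • (1 : Matrix W W ℤ[X])) with hQ
  set S : Matrix (W ⊕ W) (W ⊕ W) ℤ[X] := fromBlocks 0 1 1 0 with hS
  have hSdet : det S = (-1) ^ n := by
    have e1 : S * fromBlocks 1 0 1 1 * fromBlocks 1 (-1) 0 1
        = fromBlocks 1 0 1 (-1 : Matrix W W ℤ[X]) := by
      rw [hS, fromBlocks_multiply, fromBlocks_multiply]
      congr 1 <;> simp
    have := congrArg det e1
    simp only [det_mul, det_fromBlocks_zero₁₂, det_fromBlocks_zero₂₁, det_one, one_mul,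
      mul_one, det_neg, det_one] at this
    rw [this, hn]
  have hmul : S * fromBlocks ((X : ℤ[X]) • 1 + A') 1 1 ((X : ℤ[X]) • 1)
      = fromBlocks 1 ((X : ℤ[X]) • 1) ((X : ℤ[X]) • 1 + A') 1 := by
    rw [hS, fromBlocks_multiply]
    congr 1 <;> simp
  have hd : det (fromBlocks (1 : Matrix W W ℤ[X]) ((X : ℤ[X]) • 1)
      ((X : ℤ[X]) • 1 + A') 1) = Q := by
    rw [det_fromBlocks_one₁₁, hQ]
    congr 1
    simp only [Matrix.add_mul, Matrix.smul_mul, Matrix.mul_smul, one_mul, mul_one,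
      smul_add, smul_smul, ← sq]
    abel
  have hcomb := congrArg det hmul
  rw [det_mul, hSdet, hd] at hcomb
  have hsq : ((-1 : ℤ[X]) ^ n) * ((-1 : ℤ[X]) ^ n) = 1 := by
    rw [← pow_add, ← two_mul, pow_mul, neg_one_sq, one_pow]
  calc det (fromBlocks ((X : ℤ[X]) • 1 + A') 1 1 ((X : ℤ[X]) • 1))
      = (((-1 : ℤ[X]) ^ n) * ((-1 : ℤ[X]) ^ n)) *
        det (fromBlocks ((X : ℤ[X]) • 1 + A') 1 1 ((X : ℤ[X]) • 1)) := by rw [hsq, one_mul]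
    _ = ((-1 : ℤ[X]) ^ n) * Q := by rw [mul_assoc, hcomb]

lemma key_coeff (A : Matrix W W ℤ) (i : ℕ) (hi : i ≤ 2 * Fintype.card W) :
    (fromBlocks A 1 1 (0 : Matrix W W ℤ)).charpoly.coeff (2 * Fintype.card W - i)
      = (-1) ^ (Fintype.card W + i) *
        (fromBlocks A 1 1 (0 : Matrix W W ℤ)).charpoly.coeff i := by
  set p := (fromBlocks A 1 1 (0 : Matrix W W ℤ)).charpoly with hp
  have hdeg : p.natDegree = 2 * Fintype.card W := by
    rw [hp, Matrix.charpoly_natDegree_eq_dim, Fintype.card_sum, two_mul]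
  have h1 : p.coeff (2 * Fintype.card W - i) = p.reverse.coeff i := by
    rw [coeff_reverse, hdeg, revAt_le hi]
  have hsq : ((-1 : ℤ[X]) ^ Fintype.card W) * ((-1 : ℤ[X]) ^ Fintype.card W) = 1 := by
    rw [← pow_add, ← two_mul, pow_mul, neg_one_sq, one_pow]
  have h2 : p.reverse = (-1 : ℤ[X]) ^ Fintype.card W * p.comp (-X) := by
    rw [hp, key1, key2, ← mul_assoc, hsq, one_mul]
  rw [h1, h2, neg_one_pow_C, coeff_C_mul, coeff_comp_neg_X, pow_add]
  ring

end Key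

/-- The equivalence `V × Bool ≃ V ⊕ V`. -/
def prodBoolEquivSum (V : Type*) : V × Bool ≃ V ⊕ V where
  toFun x := cond x.2 (Sum.inr x.1) (Sum.inl x.1)
  invFun y := Sum.elim (fun v => (v, false)) (fun v => (v, true)) y
  left_inv := by rintro ⟨v, (_ | _)⟩ <;> rfl
  right_inv := by rintro (v | v) <;> rfl

@[simp] lemma prodBoolEquivSum_symm_inl {V : Type*} (v : V) :
    (prodBoolEquivSum V).symm (Sum.inl v) = (v, false) := rfl

@[simp] lemma prodBoolEquivSum_symm_inr {V : Type*} (v : V) :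
    (prodBoolEquivSum V).symm (Sum.inr v) = (v, true) := rfl

/-- The characteristic polynomial (of the adjacency matrix) of a finite simple graph. -/
noncomputable def charPoly {V : Type*} [Finite V] (G : SimpleGraph V) : Polynomial ℤ :=
  letI := Fintype.ofFinite V
  letI := Classical.decEq V
  letI := Classical.decRel G.Adj
  (SimpleGraph.adjMatrix ℤ G).charpoly

/-- The hairing of `G`: attach a pendant vertex to every vertex of `G`.
Vertices `(u, false)` form the original graph and `(u, true)` is the pendant at `u`. -/
def hairing {V : Type*} (G : SimpleGraph V) : SimpleGraph (V × Bool) where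
  Adj a b := (a.2 = false ∧ b.2 = false ∧ G.Adj a.1 b.1) ∨ (a.1 = b.1 ∧ a.2 ≠ b.2)
  symm := by
    constructor
    rintro a b (⟨ha, hb, hadj⟩ | ⟨h1, h2⟩)
    · exact Or.inl ⟨hb, ha, hadj.symm⟩
    · exact Or.inr ⟨h1.symm, h2.symm⟩
  loopless := by
    constructor
    rintro a (⟨_, _, hadj⟩ | ⟨_, h⟩)
    · exact G.irrefl hadj
    · exact h rfl

lemma hairing_adj {V : Type*} (G : SimpleGraph V) (a b : V × Bool) :
    (hairing G).Adj a b ↔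
      (a.2 = false ∧ b.2 = false ∧ G.Adj a.1 b.1) ∨ (a.1 = b.1 ∧ a.2 ≠ b.2) := Iff.rfl

/-- Writing `χ_{H(G)}(λ) = Σ_{i=0}^{2n} a_i λ^(2n-i)`, we have
`a_i = (-1)^(n+i) a_(2n-i)` for all `0 ≤ i ≤ 2n`. -/
theorem charPoly_hairing_coeff_symmetry {V : Type*} [Finite V] (G : SimpleGraph V) :
    ∀ i ≤ 2 * Nat.card V,
      (charPoly (hairing G)).coeff (2 * Nat.card V - i) =
        (-1 : ℤ) ^ (Nat.card V + i) * (charPoly (hairing G)).coeff i := by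
  intro i hi
  letI : Fintype V := Fintype.ofFinite V
  letI : DecidableEq V := Classical.decEq V
  letI : DecidableRel G.Adj := Classical.decRel G.Adj
  letI : Fintype (V × Bool) := Fintype.ofFinite (V × Bool)
  letI : DecidableEq (V × Bool) := Classical.decEq (V × Bool)
  letI : DecidableRel (hairing G).Adj := Classical.decRel (hairing G).Adj
  have hcard : Nat.card V = Fintype.card V := Nat.card_eq_fintype_card
  have hmat : Matrix.reindex (prodBoolEquivSum V) (prodBoolEquivSum V)
        ((hairing G).adjMatrix ℤ)
      = Matrix.fromBlocks (G.adjMatrix ℤ) 1 1 (0 : Matrix V V ℤ) := by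
    ext (u | u) (v | v) <;>
      simp [Matrix.reindex_apply, Matrix.submatrix_apply, hairing_adj,
        SimpleGraph.adjMatrix_apply, Matrix.one_apply]
  have hcp : charPoly (hairing G)
      = (Matrix.fromBlocks (G.adjMatrix ℤ) 1 1 (0 : Matrix V V ℤ)).charpoly := by
    rw [show charPoly (hairing G) = ((hairing G).adjMatrix ℤ).charpoly from by
      unfold charPoly; congr 1]
    rw [← hmat, Matrix.charpoly_reindex]
  rw [hcp, hcard]
  exact key_coeff (G.adjMatrix ℤ) i (by rwa [← hcard])
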